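/- Let M be a 3-dimensional almost paracontact metric manifold and γ: I → M a slant curve with g(γ̇,γ̇) = ε₁ = ±1 and g(γ̇,ξ) = c. The three vector fields γ̇, φγ̇, ξ along γ are linearly dependent if and only if γ̇ = cξ or γ̇ = cξ ± φγ̇; in that case necessarily ε₁ = 1 and c² = 1. -/

import Mathlib

/-- The data, along a curve `γ : I → M`, of a 3-dimensional almost paracontact
metric manifold `(M, φ, ξ, η, g)`: the pullback tangent bundle is trivialized
over a real vector space `V`; `g t`, `phi t`, `xi t` are the metric, the
structure tensor and the Reeb field at the point `γ t`, and `T t = γ̇(t)` is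
the velocity of the curve.  The 1-form `η` is recovered as `η(v) = g v ξ`.
The axioms record: `η(ξ) = 1`, `φξ = 0`, `φ² = Id − η ⊗ ξ`,
`g(φv, φw) = −g(v,w) + η(v)η(w)`, symmetry of `g`, and that `g` has
signature `(2,1)` (an orthonormal basis with signs `(+,+,−)`). -/
structure APCMCurve (V : Type*) [AddCommGroup V] [Module ℝ V] where
  g : ℝ → V →ₗ[ℝ] V →ₗ[ℝ] ℝ
  phi : ℝ → V →ₗ[ℝ] V
  xi : ℝ → V
  T : ℝ → V
  g_symm : ∀ t v w, g t v w = g t w v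
  xi_unit : ∀ t, g t (xi t) (xi t) = 1
  phi_xi : ∀ t, phi t (xi t) = 0
  phi_sq : ∀ t v, phi t (phi t v) = v - g t v (xi t) • xi t
  compat : ∀ t v w, g t (phi t v) (phi t w) = -(g t v w) + g t v (xi t) * g t w (xi t)
  signature : ∀ t, ∃ e : Module.Basis (Fin 3) ℝ V,
    g t (e 0) (e 0) = 1 ∧ g t (e 1) (e 1) = 1 ∧ g t (e 2) (e 2) = -1 ∧
    g t (e 0) (e 1) = 0 ∧ g t (e 0) (e 2) = 0 ∧ g t (e 1) (e 2) = 0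



section Aux

variable {V : Type*} [AddCommGroup V] [Module ℝ V]

lemma APCMCurve.xi_ne_zero (M : APCMCurve V) (t : ℝ) : M.xi t ≠ 0 := by
  intro h
  have h1 := M.xi_unit t
  rw [h] at h1
  simp at h1

lemma APCMCurve.eta_phi (M : APCMCurve V) (t : ℝ) (v : V) :
    M.g t (M.phi t v) (M.xi t) = 0 := by
  have h1 := M.phi_sq t (M.phi t v)
  have h2 : M.phi t (M.phi t (M.phi t v)) = M.phi t v := by
    rw [M.phi_sq t v, map_sub, map_smul, M.phi_xi, smul_zero, sub_zero]
  rw [h2] at h1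
  have h3 : M.g t (M.phi t v) (M.xi t) • M.xi t = 0 := sub_eq_self.mp h1.symm
  rcases smul_eq_zero.mp h3 with h4 | h4
  · exact h4
  · exact absurd h4 (M.xi_ne_zero t)

lemma slant_key (M : APCMCurve V) (e1 c : ℝ)
    (hT : ∀ t, M.g t (M.T t) (M.T t) = e1)
    (hslant : ∀ t, M.g t (M.T t) (M.xi t) = c) (t : ℝ)
    (h : ¬ LinearIndependent ℝ ![M.T t, M.phi t (M.T t), M.xi t]) :
    c ^ 2 = e1 ∧ (M.T t = c • M.xi t ∨ M.T t = c • M.xi t + M.phi t (M.T t) ∨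
        M.T t = c • M.xi t - M.phi t (M.T t)) := by
  rw [Fintype.not_linearIndependent_iff] at h
  obtain ⟨f, hf, i, hi⟩ := h
  rw [Fin.sum_univ_three] at hf
  simp only [Matrix.cons_val_zero, Matrix.cons_val_one, Matrix.head_cons,
    Matrix.cons_val_two, Matrix.tail_cons] at hf
  -- basic Gram matrix entries
  have hpx : M.g t (M.phi t (M.T t)) (M.xi t) = 0 := M.eta_phi t (M.T t)
  have hxp : M.g t (M.xi t) (M.phi t (M.T t)) = 0 := by rw [M.g_symm]; exact hpx
  have hTp : M.g t (M.T t) (M.phi t (M.T t)) = 0 := by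
    have h1 := M.compat t (M.T t) (M.phi t (M.T t))
    rw [hslant t, hpx, M.phi_sq t (M.T t), hslant t, map_sub, map_smul] at h1
    rw [M.g_symm t (M.phi t (M.T t)) (M.T t)] at h1
    rw [hpx] at h1
    simp only [smul_eq_mul, mul_zero, sub_zero] at h1
    linarith
  have hpT : M.g t (M.phi t (M.T t)) (M.T t) = 0 := by rw [M.g_symm]; exact hTp
  have hpp : M.g t (M.phi t (M.T t)) (M.phi t (M.T t)) = -e1 + c ^ 2 := by
    have h1 := M.compat t (M.T t) (M.T t)
    rw [hT t, hslant t] at h1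
    rw [h1]; ring
  have hxT : M.g t (M.xi t) (M.T t) = c := by rw [M.g_symm]; exact hslant t
  -- pairings of the relation
  have p1 : f 0 * e1 + f 2 * c = 0 := by
    have q := congrArg (fun v => M.g t v (M.T t)) hf
    simp only [map_add, map_smul, LinearMap.add_apply, LinearMap.smul_apply,
      smul_eq_mul, map_zero, LinearMap.zero_apply] at q
    rw [hT t, hpT, hxT] at q
    linarith
  have p2 : f 1 * (-e1 + c ^ 2) = 0 := by
    have q := congrArg (fun v => M.g t v (M.phi t (M.T t))) hf
    simp only [map_add, map_smul, LinearMap.add_apply, LinearMap.smul_apply,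
      smul_eq_mul, map_zero, LinearMap.zero_apply] at q
    rw [hTp, hpp, hxp] at q
    linarith
  have p3 : f 0 * c + f 2 = 0 := by
    have q := congrArg (fun v => M.g t v (M.xi t)) hf
    simp only [map_add, map_smul, LinearMap.add_apply, LinearMap.smul_apply,
      smul_eq_mul, map_zero, LinearMap.zero_apply] at q
    rw [hslant t, hpx, M.xi_unit t] at q
    linarith
  have hc2 : c ^ 2 = e1 := by
    by_contra hne
    have hf1 : f 1 = 0 := by
      rcases mul_eq_zero.mp p2 with h' | h'
      · exact h'
      · exact absurd (by linarith) hne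
    have hf0 : f 0 = 0 := by
      have h5 : f 0 * (e1 - c ^ 2) = 0 := by linear_combination p1 - c * p3
      rcases mul_eq_zero.mp h5 with h' | h'
      · exact h'
      · exact absurd (by linarith) hne
    have hf2 : f 2 = 0 := by linear_combination p3 - c * hf0
    fin_cases i <;> simp_all
  refine ⟨hc2, ?_⟩
  have hu_phi : M.phi t (M.T t - c • M.xi t) = M.phi t (M.T t) := by
    rw [map_sub, map_smul, M.phi_xi, smul_zero, sub_zero]
  have hphi2 : M.phi t (M.phi t (M.T t)) = M.T t - c • M.xi t := by
    rw [M.phi_sq, hslant t]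
  have hrel : f 0 • (M.T t - c • M.xi t) + f 1 • M.phi t (M.T t) = 0 := by
    have hf2' : f 2 = -(f 0 * c) := by linarith
    rw [hf2'] at hf
    calc f 0 • (M.T t - c • M.xi t) + f 1 • M.phi t (M.T t)
        = f 0 • M.T t + f 1 • M.phi t (M.T t) + -(f 0 * c) • M.xi t := by module
      _ = 0 := hf
  by_cases hp0 : M.phi t (M.T t) = 0
  · left
    have hu0 : M.T t - c • M.xi t = 0 := by rw [← hphi2, hp0, map_zero]
    rw [sub_eq_zero] at hu0
    exact hu0
  · have hf0 : f 0 ≠ 0 := by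
      intro hf0
      have hf1 : f 1 = 0 := by
        rw [hf0, zero_smul, zero_add] at hrel
        rcases smul_eq_zero.mp hrel with h' | h'
        · exact h'
        · exact absurd h' hp0
      have hf2 : f 2 = 0 := by rw [hf0] at p3; linarith
      fin_cases i <;> simp_all
    set l : ℝ := -(f 1) / f 0 with hl
    have hu : M.T t - c • M.xi t = l • M.phi t (M.T t) := by
      have h1 : f 0 • (M.T t - c • M.xi t) = f 0 • (l • M.phi t (M.T t)) := by
        rw [smul_smul, hl]
        have hcoe : f 0 * (-f 1 / f 0) = -(f 1) := by field_simp [mul_comm]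
        rw [hcoe, neg_smul]
        exact eq_neg_of_add_eq_zero_left hrel
      exact smul_right_injective V hf0 h1
    have hpu : M.phi t (M.T t) = l • (M.T t - c • M.xi t) := by
      have := congrArg (M.phi t) hu
      rw [hu_phi, map_smul, hphi2] at this
      exact this
    have hll : M.phi t (M.T t) = (l * l) • M.phi t (M.T t) := by
      calc M.phi t (M.T t) = l • (M.T t - c • M.xi t) := hpu
        _ = l • (l • M.phi t (M.T t)) := by rw [hu]
        _ = (l * l) • M.phi t (M.T t) := smul_smul l l _
    have hz : (1 - l * l) • M.phi t (M.T t) = 0 := by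
      rw [sub_smul, one_smul]
      nth_rewrite 1 [hll]
      exact sub_self _
    have hl2 : l * l = 1 := by
      rcases smul_eq_zero.mp hz with h' | h'
      · linarith
      · exact absurd h' hp0
    have : (l - 1) * (l + 1) = 0 := by nlinarith
    rcases mul_eq_zero.mp this with h' | h'
    · right; left
      have hl1 : l = 1 := by linarith
      rw [hl1, one_smul] at hu
      calc M.T t = (M.T t - c • M.xi t) + c • M.xi t := by abel
        _ = M.phi t (M.T t) + c • M.xi t := by rw [hu]
        _ = c • M.xi t + M.phi t (M.T t) := by abel
    · right; right
      have hl1 : l = -1 := by linarith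
      rw [hl1] at hu
      calc M.T t = (M.T t - c • M.xi t) + c • M.xi t := by abel
        _ = (-1 : ℝ) • M.phi t (M.T t) + c • M.xi t := by rw [hu]
        _ = c • M.xi t - M.phi t (M.T t) := by module

end Aux

/-- Let `γ` be a slant curve (`g(γ̇,ξ) = c` constant) in a
3-dimensional almost paracontact metric manifold with `g(γ̇,γ̇) = ε₁ = ±1`.
The three vector fields `γ̇, φγ̇, ξ` along `γ` are linearly dependent if and
only if `γ̇ = cξ` or `γ̇ = cξ ± φγ̇`; and in that case necessarily `ε₁ = 1`
and `c² = 1`. -/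
theorem slant_dependent_iff {V : Type*} [AddCommGroup V] [Module ℝ V]
    (M : APCMCurve V) (e1 c : ℝ) (he1 : e1 = 1 ∨ e1 = -1)
    (hT : ∀ t, M.g t (M.T t) (M.T t) = e1)
    (hslant : ∀ t, M.g t (M.T t) (M.xi t) = c) :
    (∀ t : ℝ, ¬ LinearIndependent ℝ ![M.T t, M.phi t (M.T t), M.xi t] ↔
      (M.T t = c • M.xi t ∨ M.T t = c • M.xi t + M.phi t (M.T t) ∨
        M.T t = c • M.xi t - M.phi t (M.T t))) ∧
    ((∃ t : ℝ, ¬ LinearIndependent ℝ ![M.T t, M.phi t (M.T t), M.xi t]) →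
      e1 = 1 ∧ c ^ 2 = 1) := by
  constructor
  · intro t
    constructor
    · intro h
      exact (slant_key M e1 c hT hslant t h).2
    · intro h li
      have key := Fintype.linearIndependent_iff.mp li
      rcases h with h | h | h
      · have h0 := key ![1, 0, -c] (by
          rw [Fin.sum_univ_three]
          simp only [Matrix.cons_val_zero, Matrix.cons_val_one, Matrix.head_cons,
            Matrix.cons_val_two, Matrix.tail_cons]
          have e : (1 : ℝ) • M.T t + (0 : ℝ) • M.phi t (M.T t) + (-c) • M.xi t
              = M.T t - c • M.xi t := by module
          rw [e, sub_eq_zero]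
          exact h) 0
        simp at h0
      · have h0 := key ![1, -1, -c] (by
          rw [Fin.sum_univ_three]
          simp only [Matrix.cons_val_zero, Matrix.cons_val_one, Matrix.head_cons,
            Matrix.cons_val_two, Matrix.tail_cons]
          have e : (1 : ℝ) • M.T t + (-1 : ℝ) • M.phi t (M.T t) + (-c) • M.xi t
              = M.T t - (c • M.xi t + M.phi t (M.T t)) := by module
          rw [e, sub_eq_zero]
          exact h) 0
        simp at h0
      · have h0 := key ![1, 1, -c] (by
          rw [Fin.sum_univ_three]
          simp only [Matrix.cons_val_zero, Matrix.cons_val_one, Matrix.head_cons,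
            Matrix.cons_val_two, Matrix.tail_cons]
          have e : (1 : ℝ) • M.T t + (1 : ℝ) • M.phi t (M.T t) + (-c) • M.xi t
              = M.T t - (c • M.xi t - M.phi t (M.T t)) := by module
          rw [e, sub_eq_zero]
          exact h) 0
        simp at h0
  · rintro ⟨t, h⟩
    have hc2 := (slant_key M e1 c hT hslant t h).1
    have he : e1 = 1 := by
      rcases he1 with h' | h'
      · exact h'
      · exfalso; nlinarith [sq_nonneg c]
    exact ⟨he, by rw [hc2, he]⟩
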